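/- Let G be a strongly connected digraph with start vertex s, and let e=(u,v) be a strong bridge that is a bridge in G_s but not in G_s^R. Then the number of strongly connected components of G\e equals the number of vertices w ∈ D(v) such that h(w) ∉ D(v), plus one, where h(w) is the parent of w in the loop nesting tree H of G_s. -/

import Mathlib

namespace StrongConn

variable {V : Type*}

/-- `p` is a walk in the digraph `G` from `u` to `v`, recorded as the list of visited vertices. -/
def IsWalk (G : V → V → Prop) (u v : V) (p : List V) : Prop :=
  p.Chain' G ∧ p.head? = some u ∧ p.getLast? = some v

/-- The directed edge `(a,b)` occurs on the walk `p`. -/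
def EdgeOn (a b : V) (p : List V) : Prop := (a, b) ∈ p.zip p.tail

/-- `v` is reachable from `u` in `G`. -/
def Reach (G : V → V → Prop) (u v : V) : Prop := ∃ p, IsWalk G u v p

/-- `u` and `v` are strongly connected in `G`. -/
def SConn (G : V → V → Prop) (u v : V) : Prop := Reach G u v ∧ Reach G v u

def StronglyConnected (G : V → V → Prop) : Prop := ∀ u v, Reach G u v

/-- `G` with the edge `(a,b)` deleted. -/
def DelEdge (G : V → V → Prop) (a b : V) : V → V → Prop :=
  fun x y => G x y ∧ ¬(x = a ∧ y = b)

/-- `G` with the vertex `u` (and all incident edges) deleted. -/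
def DelVertex (G : V → V → Prop) (u : V) : V → V → Prop :=
  fun x y => G x y ∧ x ≠ u ∧ y ≠ u

/-- `C` is a strongly connected component of `G`. -/
def IsSCC (G : V → V → Prop) (C : Set V) : Prop :=
  C.Nonempty ∧ (∀ x ∈ C, ∀ y ∈ C, SConn G x y) ∧ ∀ x ∈ C, ∀ y, SConn G x y → y ∈ C

/-- `(a,b)` is a strong bridge: an edge whose removal increases the number of
strongly connected components, i.e. it separates some strongly connected pair. -/
def IsStrongBridge (G : V → V → Prop) (a b : V) : Prop :=
  G a b ∧ ∃ x y, SConn G x y ∧ ¬ SConn (DelEdge G a b) x y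

/-- `u` is a strong articulation point: removing it increases the number of strongly
connected components, i.e. it separates some strongly connected pair of other vertices. -/
def IsStrongArticulationPoint (G : V → V → Prop) (u : V) : Prop :=
  ∃ x y, x ≠ u ∧ y ≠ u ∧ SConn G x y ∧ ¬ SConn (DelVertex G u) x y

/-- The reverse digraph. -/
def Rev (G : V → V → Prop) : V → V → Prop := fun x y => G y x

/-- `u` dominates `v` in the flow graph `G_s`; equivalently, `u` is an ancestor of `v`
(and `v` a descendant of `u`) in the dominator tree of `G_s`. -/
def Dom (G : V → V → Prop) (s u v : V) : Prop :=
  ∀ p, IsWalk G s v p → u ∈ p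

/-- `u` is the immediate dominator of `v` in `G_s` (the parent of `v` in the dominator tree). -/
def Idom (G : V → V → Prop) (s u v : V) : Prop :=
  u ≠ v ∧ Dom G s u v ∧ ∀ w, w ≠ v → Dom G s w v → Dom G s w u

/-- Edge `(a,b)` is a bridge of the flow graph `G_s`: every walk from `s` to `b` uses it. -/
def IsBridge (G : V → V → Prop) (s a b : V) : Prop :=
  G a b ∧ ∀ p, IsWalk G s b p → EdgeOn a b p

/-- `r` is the head of some bridge of `G_s`, i.e. a non-`s` root in the bridge
decomposition of the dominator tree. -/
def IsBridgeHead (G : V → V → Prop) (s r : V) : Prop :=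
  ∃ a, IsBridge G s a r

/-- `r` is the root of the tree containing `x` in the bridge decomposition of the
dominator tree of `G_s`: `r` dominates `x`, `r` is `s` or a bridge head, and every
bridge head dominating `x` dominates `r`. -/
def IsBDRoot (G : V → V → Prop) (s r x : V) : Prop :=
  Dom G s r x ∧ (r = s ∨ IsBridgeHead G s r) ∧
    ∀ z, Dom G s z x → IsBridgeHead G s z → Dom G s z r

/-- A depth-first search tree of `G` rooted at `s`, given by a parent function and a
preorder numbering. -/
structure DFSTree (G : V → V → Prop) (s : V) where
  parent : V → V
  pre : V → ℕ
  parent_root : parent s = s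
  parent_edge : ∀ v, v ≠ s → G (parent v) v
  root_reach : ∀ v, ∃ n, parent^[n] v = s
  pre_inj : Function.Injective pre
  pre_parent : ∀ v, v ≠ s → pre (parent v) < pre v
  /-- Descendants of a vertex form a contiguous interval in preorder. -/
  interval : ∀ u v w, (∃ n, parent^[n] w = u) → pre u ≤ pre v → pre v ≤ pre w →
      ∃ n, parent^[n] v = u
  /-- The defining property of depth-first search trees: every edge going forward
  in preorder goes to a descendant. -/
  dfs_edge : ∀ u v, G u v → pre u < pre v → ∃ n, parent^[n] v = u

/-- `u` is an ancestor of `v` in the tree `T` (every vertex is an ancestor of itself). -/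
def DFSTree.Anc {G : V → V → Prop} {s : V} (T : DFSTree G s) (u v : V) : Prop :=
  ∃ n, T.parent^[n] v = u

/-- `x ∈ loop(u)` with respect to the tree-ancestor relation `tanc`: `x` is a descendant
of `u` and there is a walk from `x` to `u` using only descendants of `u`. -/
def InLoop (G : V → V → Prop) (tanc : V → V → Prop) (u x : V) : Prop :=
  tanc u x ∧ ∃ p, IsWalk G x u p ∧ ∀ y ∈ p, tanc u y

/-- `hp` is the parent function of the loop nesting tree of `G_s` with respect to the
DFS-tree ancestor relation `tanc`: `hp x` is the nearest proper ancestor `u` of `x`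
in the DFS tree with `x ∈ loop(u)`. -/
def IsLoopParent (G : V → V → Prop) (s : V) (tanc : V → V → Prop) (hp : V → V) : Prop :=
  hp s = s ∧ ∀ x, x ≠ s →
    (tanc (hp x) x ∧ hp x ≠ x ∧ InLoop G tanc (hp x) x ∧
      ∀ u, tanc u x → u ≠ x → InLoop G tanc u x → tanc u (hp x))

/-- `u` is an ancestor of `v` in the loop nesting tree with parent function `hp`. -/
def HAnc (hp : V → V) (u v : V) : Prop := ∃ n, hp^[n] v = u

/-- `w` is the nearest common ancestor of `x` and `y` in the loop nesting tree
with parent function `hp`. -/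
def HNca (hp : V → V) (x y w : V) : Prop :=
  HAnc hp w x ∧ HAnc hp w y ∧ ∀ z, HAnc hp z x → HAnc hp z y → HAnc hp z w

/-- `u` is a nontrivial dominator of `G_s`: `u ≠ s` and `u` is not a leaf of the
dominator tree (it properly dominates some vertex). -/
def NontrivialDom (G : V → V → Prop) (s u : V) : Prop :=
  u ≠ s ∧ ∃ w, w ≠ u ∧ Dom G s u w

/-- `a` and `b` are siblings in the dominator tree of `G_s`. -/
def SiblingInD (G : V → V → Prop) (s a b : V) : Prop :=
  a ≠ b ∧ ∃ w, Idom G s w a ∧ Idom G s w b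

/-- Given the bridge-decomposition root function `r` and loop-nesting parent `hp`,
`z` is a boundary vertex. -/
def Boundary (s : V) (r hp : V → V) (z : V) : Prop := z = s ∨ r (hp z) ≠ r z

/-- `z` is the nearest boundary ancestor of `x` in the loop nesting tree. -/
def IsNearestBoundary (s : V) (r hp : V → V) (x z : V) : Prop :=
  HAnc hp z x ∧ Boundary s r hp z ∧
    ∀ z', HAnc hp z' x → Boundary s r hp z' → HAnc hp z' z

/-- `x` and `y` are 2-edge-connected: no single edge deletion leaves them in
different strongly connected components. -/
def TwoEdgeConnected (G : V → V → Prop) (x y : V) : Prop :=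
  ∀ a b, G a b → SConn (DelEdge G a b) x y


/-! ### Auxiliary development -/

open Relation

section WalkLemmas

variable {G : V → V → Prop} {x y z a b : V} {p q : List V}

lemma isWalk_single (G : V → V → Prop) (x : V) : IsWalk G x x [x] :=
  ⟨List.isChain_singleton x, rfl, rfl⟩

lemma mem_of_getLast?' (h : p.getLast? = some a) : a ∈ p := by
  cases p with
  | nil => simp at h
  | cons b t =>
    rw [List.getLast?_eq_getLast_of_ne_nil (by simp)] at h
    exact (Option.some_inj.1 h) ▸ List.getLast_mem _

lemma IsWalk.head_mem (h : IsWalk G x y p) : x ∈ p := by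
  cases p with
  | nil => simp [IsWalk] at h
  | cons b t =>
    have hb : b = x := by
      have := h.2.1; simpa using this
    simp [hb]

lemma IsWalk.last_mem (h : IsWalk G x y p) : y ∈ p := mem_of_getLast?' h.2.2

lemma IsWalk.concat (h : IsWalk G x y p) (e : G y z) : IsWalk G x z (p ++ [z]) := by
  obtain ⟨hc, hh, hl⟩ := h
  refine ⟨List.isChain_append.2 ⟨hc, List.isChain_singleton z, ?_⟩, ?_, List.getLast?_concat (l := p)⟩
  · intro a ha b hb
    rw [hl] at ha
    simp only [List.head?_cons, Option.mem_def, Option.some.injEq] at ha hb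
    subst ha; subst hb
    exact e
  · cases p with
    | nil => simp at hh
    | cons b t => simpa using hh

lemma isWalk_cases (h : IsWalk G x y p) :
    (p = [x] ∧ y = x) ∨ ∃ c t, p = x :: c :: t ∧ G x c ∧ IsWalk G c y (c :: t) := by
  obtain ⟨hc, hh, hl⟩ := h
  cases p with
  | nil => simp at hh
  | cons b t =>
    obtain rfl : b = x := by simpa using hh
    cases t with
    | nil =>
      left
      refine ⟨rfl, ?_⟩
      simp only [List.getLast?_singleton, Option.some.injEq] at hl
      exact hl.symm
    | cons c t' =>
      right
      simp only [List.Chain', List.isChain_cons_cons] at hc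
      rw [List.getLast?_cons_cons] at hl
      exact ⟨c, t', rfl, hc.1, hc.2, rfl, hl⟩

lemma isWalk_rtg {P : V → Prop} :
    ∀ (p : List V) (x : V), IsWalk G x y p → (∀ z ∈ p, P z) →
      ReflTransGen (fun a b => G a b ∧ P a ∧ P b) x y := by
  intro p
  induction p with
  | nil => intro x h _; exact absurd h.2.1 (by simp)
  | cons b t ih =>
    intro x h hP
    rcases isWalk_cases h with ⟨_, rfl⟩ | ⟨c, t', hpeq, e, h'⟩
    · exact .refl
    · injection hpeq with h1 h2
      subst h2
      subst h1
      exact .head ⟨e, hP _ (by simp), hP c (by simp)⟩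
        (ih c h' (fun z hz => hP z (by simp [hz])))

lemma rtg_walkP {P : V → Prop} (hx : P x)
    (h : ReflTransGen (fun a b => G a b ∧ P b) x y) :
    ∃ p, IsWalk G x y p ∧ ∀ z ∈ p, P z := by
  induction h with
  | refl => exact ⟨[x], isWalk_single G x, by simpa using hx⟩
  | tail _ e ih =>
    obtain ⟨p, hpw, hpP⟩ := ih
    refine ⟨p ++ [_], hpw.concat e.1, ?_⟩
    intro z hz
    rcases List.mem_append.1 hz with h' | h'
    · exact hpP z h'
    · simp only [List.mem_singleton] at h'
      subst h'
      exact e.2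

lemma reach_iff : Reach G x y ↔ ReflTransGen G x y := by
  constructor
  · rintro ⟨p, hp⟩
    exact ReflTransGen.mono
      (fun a b h => h.1) _ _ (isWalk_rtg (P := fun _ => True) p x hp (fun z _ => trivial))
  · intro h
    induction h with
    | refl => exact ⟨[x], isWalk_single G x⟩
    | tail _ e ih => obtain ⟨p, hp⟩ := ih; exact ⟨_, hp.concat e⟩

lemma reach_trans' {H : V → V → Prop} (h1 : Reach H x y) (h2 : Reach H y z) :
    Reach H x z :=
  reach_iff.2 ((reach_iff.1 h1).trans (reach_iff.1 h2))

lemma sconn_refl' (H : V → V → Prop) (x : V) : SConn H x x :=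
  ⟨⟨[x], isWalk_single H x⟩, ⟨[x], isWalk_single H x⟩⟩

lemma sconn_symm' {H : V → V → Prop} (h : SConn H x y) : SConn H y x := ⟨h.2, h.1⟩

lemma sconn_trans' {H : V → V → Prop} (h1 : SConn H x y) (h2 : SConn H y z) :
    SConn H x z :=
  ⟨reach_trans' h1.1 h2.1, reach_trans' h2.2 h1.2⟩

lemma edgeOn_cons : EdgeOn a b (x :: q) ↔ (q.head? = some b ∧ x = a) ∨ EdgeOn a b q := by
  cases q with
  | nil => simp [EdgeOn]
  | cons c t =>
    simp only [EdgeOn, List.tail_cons, List.zip_cons_cons, List.mem_cons, Prod.mk.injEq,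
      List.head?_cons, Option.some.injEq]
    constructor
    · rintro (⟨rfl, rfl⟩ | h)
      · exact Or.inl ⟨rfl, rfl⟩
      · exact Or.inr h
    · rintro (⟨rfl, rfl⟩ | h)
      · exact Or.inl ⟨rfl, rfl⟩
      · exact Or.inr h

lemma edgeOn_concat :
    EdgeOn a b (p ++ [z]) ↔ EdgeOn a b p ∨ (p.getLast? = some a ∧ z = b) := by
  induction p with
  | nil => simp [EdgeOn]
  | cons x q ih =>
    rw [List.cons_append, edgeOn_cons, ih, edgeOn_cons]
    cases q with
    | nil => simp [EdgeOn]; tauto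
    | cons c t =>
      simp only [List.cons_append, List.head?_cons, List.getLast?_cons_cons]
      tauto

lemma mem_of_edgeOn (h : EdgeOn a b p) : a ∈ p ∧ b ∈ p :=
  ⟨(List.of_mem_zip h).1, List.mem_of_mem_tail (List.of_mem_zip h).2⟩

lemma rel_of_edgeOn {R : V → V → Prop} :
    ∀ {p : List V}, List.Chain' R p → EdgeOn a b p → R a b
  | [], _, h => absurd h (by simp [EdgeOn])
  | x :: q, hc, h => by
    rcases edgeOn_cons.1 h with ⟨hb, rfl⟩ | h'
    · cases q with
      | nil => simp at hb
      | cons c t =>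
        simp only [List.head?_cons, Option.some.injEq] at hb
        subst hb
        exact (List.isChain_cons_cons.1 hc).1
    · exact rel_of_edgeOn hc.tail h'

lemma chain'_delEdge :
    ∀ {p : List V}, List.Chain' G p → ¬ EdgeOn a b p → List.Chain' (DelEdge G a b) p
  | [], _, _ => List.isChain_nil
  | [x], _, _ => List.isChain_singleton x
  | x :: c :: t, hc, hne => by
    simp only [List.Chain', List.isChain_cons_cons] at hc ⊢
    refine ⟨⟨hc.1, ?_⟩, chain'_delEdge hc.2 (fun h => hne (edgeOn_cons.2 (Or.inr h)))⟩
    rintro ⟨rfl, rfl⟩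
    exact hne (edgeOn_cons.2 (Or.inl ⟨rfl, rfl⟩))

lemma isWalk_delEdge_iff :
    IsWalk (DelEdge G a b) x y p ↔ IsWalk G x y p ∧ ¬ EdgeOn a b p := by
  constructor
  · intro h
    refine ⟨⟨h.1.imp (fun _ _ hh => hh.1), h.2.1, h.2.2⟩, fun he => ?_⟩
    exact (rel_of_edgeOn h.1 he).2 ⟨rfl, rfl⟩
  · rintro ⟨⟨hc, hh, hl⟩, hne⟩
    exact ⟨chain'_delEdge hc hne, hh, hl⟩

lemma isWalk_rev_iff : IsWalk (Rev G) x y p ↔ IsWalk G y x p.reverse := by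
  constructor
  · rintro ⟨hc, hh, hl⟩
    refine ⟨List.isChain_reverse.2 hc, ?_, ?_⟩
    · rw [List.head?_reverse]; exact hl
    · rw [List.getLast?_reverse]; exact hh
  · rintro ⟨hc, hh, hl⟩
    refine ⟨List.isChain_reverse.1 hc, ?_, ?_⟩
    · rw [List.getLast?_reverse] at hl; exact hl
    · rw [List.head?_reverse] at hh; exact hh

lemma edgeOn_reverse : EdgeOn a b p.reverse ↔ EdgeOn b a p := by
  induction p with
  | nil => simp [EdgeOn]
  | cons x q ih =>
    rw [List.reverse_cons, edgeOn_concat, edgeOn_cons, ih, List.getLast?_reverse]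
    tauto

end WalkLemmas

section TreeLemmas

variable {G : V → V → Prop} {s x y z a b c w m : V} {T : DFSTree G s}

lemma anc_refl (T : DFSTree G s) (x : V) : T.Anc x x := ⟨0, rfl⟩

lemma anc_trans (h1 : T.Anc a b) (h2 : T.Anc b c) : T.Anc a c := by
  obtain ⟨m, hm⟩ := h1; obtain ⟨n, hn⟩ := h2
  exact ⟨m + n, by rw [Function.iterate_add_apply, hn, hm]⟩

lemma parent_iterate_root (T : DFSTree G s) : ∀ n, T.parent^[n] s = s := by
  intro n; induction n with
  | zero => rfl
  | succ n ih => rw [Function.iterate_succ_apply', ih, T.parent_root]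

lemma pre_iterate_le (T : DFSTree G s) : ∀ n (x : V), T.pre (T.parent^[n] x) ≤ T.pre x := by
  intro n
  induction n with
  | zero => intro x; exact le_rfl
  | succ n ih =>
    intro x
    rw [Function.iterate_succ_apply']
    by_cases h : T.parent^[n] x = s
    · rw [h, T.parent_root]
      have := ih x
      rwa [h] at this
    · exact le_of_lt (lt_of_lt_of_le (T.pre_parent _ h) (ih x))

lemma pre_le_of_anc (h : T.Anc a b) : T.pre a ≤ T.pre b := by
  obtain ⟨n, hn⟩ := h
  have := pre_iterate_le T n b
  rwa [hn] at this

lemma pre_root_le (T : DFSTree G s) (x : V) : T.pre s ≤ T.pre x := by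
  obtain ⟨n, hn⟩ := T.root_reach x
  have := pre_iterate_le T n x
  rwa [hn] at this

lemma anc_root' (T : DFSTree G s) (x : V) : T.Anc s x := T.root_reach x

lemma pre_lt_of_anc (h : T.Anc a b) (hne : a ≠ b) : T.pre a < T.pre b := by
  obtain ⟨n, hn⟩ := h
  cases n with
  | zero => exact absurd hn.symm hne
  | succ n =>
    rw [Function.iterate_succ_apply'] at hn
    by_cases hws : T.parent^[n] b = s
    · rw [hws, T.parent_root] at hn
      subst hn
      exact lt_of_le_of_ne (pre_root_le T b) (fun h => hne (T.pre_inj h))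
    · calc T.pre a = T.pre (T.parent (T.parent^[n] b)) := by rw [hn]
        _ < T.pre (T.parent^[n] b) := T.pre_parent _ hws
        _ ≤ T.pre b := pre_iterate_le T n b

lemma anc_antisymm (h1 : T.Anc a b) (h2 : T.Anc b a) : a = b := by
  by_contra hne
  exact absurd (pre_lt_of_anc h1 hne) (not_lt.2 (pre_le_of_anc h2))

/-- The relation `G` restricted to descendants of `w` in the DFS tree. -/
def AncRel {G : V → V → Prop} {s : V} (T : DFSTree G s) (w : V) : V → V → Prop :=
  fun a b => G a b ∧ T.Anc w a ∧ T.Anc w b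

lemma anc_of_rtg (T : DFSTree G s) (m : V) (hx : T.Anc m x)
    (h : ReflTransGen (fun a b => G a b ∧ T.pre m ≤ T.pre a ∧ T.pre m ≤ T.pre b) x y) :
    T.Anc m y := by
  induction h with
  | refl => exact hx
  | @tail b c _ e ih =>
    rcases le_or_gt (T.pre c) (T.pre b) with hle | hlt
    · exact T.interval m c b ih e.2.2 hle
    · exact anc_trans ih (T.dfs_edge b c e.1 hlt)

lemma rtg_tree_path' (T : DFSTree G s) :
    ∀ (n : ℕ) (x : V), T.parent^[n] x = w → ReflTransGen (AncRel T w) w x := by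
  intro n
  induction n with
  | zero =>
    intro x hn
    rw [Function.iterate_zero_apply] at hn
    subst hn
    exact .refl
  | succ n ih =>
    intro x hn
    by_cases hx : x = s
    · subst hx
      rw [parent_iterate_root] at hn
      subst hn
      exact .refl
    · have hn' : T.parent^[n] (T.parent x) = w := by
        rw [← Function.iterate_succ_apply]; exact hn
      exact (ih (T.parent x) hn').tail ⟨T.parent_edge x hx, ⟨n, hn'⟩, ⟨n + 1, hn⟩⟩

lemma rtg_tree_path (T : DFSTree G s) (h : T.Anc w x) :
    ReflTransGen (AncRel T w) w x := by
  obtain ⟨n, hn⟩ := h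
  exact rtg_tree_path' T n x hn

end TreeLemmas

section BridgeLemmas

variable {G : V → V → Prop} {s u v x y z a b w m : V}

lemma v_ne_s (hbr : IsBridge G s u v) : v ≠ s := by
  intro h
  have := hbr.2 [s] (by rw [h]; exact isWalk_single G s)
  simp [EdgeOn] at this

lemma dom_v_v : Dom G s v v := fun _ hw => hw.last_mem

lemma not_dom_s (hbr : IsBridge G s u v) : ¬ Dom G s v s := by
  intro h
  have := h [s] (isWalk_single G s)
  simp only [List.mem_singleton] at this
  exact v_ne_s hbr this

lemma reach_del_spec (hbr : IsBridge G s u v) :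
    ∀ w, Reach (DelEdge G u v) s w → w ≠ v ∧ ∃ p, IsWalk G s w p ∧ v ∉ p := by
  intro w hw
  rw [reach_iff] at hw
  induction hw with
  | refl =>
    exact ⟨Ne.symm (v_ne_s hbr), ⟨[s], isWalk_single G s, by simpa using v_ne_s hbr⟩⟩
  | @tail b c _ e ih =>
    obtain ⟨hbv, p, hpw, hvp⟩ := ih
    have hpc : IsWalk G s c (p ++ [c]) := hpw.concat e.1
    have hcv : c ≠ v := by
      rintro rfl
      have hb_ne_u : b ≠ u := fun h => e.2 ⟨h, rfl⟩
      have hEd := hbr.2 _ hpc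
      rcases edgeOn_concat.1 hEd with h' | ⟨hl, _⟩
      · exact hvp (mem_of_edgeOn h').2
      · have := hpw.2.2.symm.trans hl
        injection this with hbu
        exact hb_ne_u hbu
    refine ⟨hcv, p ++ [c], hpc, ?_⟩
    intro hmem
    rcases List.mem_append.1 hmem with h' | h'
    · exact hvp h'
    · simp only [List.mem_singleton] at h'
      exact hcv h'.symm

lemma dom_iff (hbr : IsBridge G s u v) (w : V) :
    Dom G s v w ↔ ¬ Reach (DelEdge G u v) s w := by
  constructor
  · intro hd hr
    obtain ⟨_, p, hpw, hvp⟩ := reach_del_spec hbr w hr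
    exact hvp (hd p hpw)
  · intro hnr p hpw
    by_contra hvp
    exact hnr ⟨p, isWalk_delEdge_iff.2 ⟨hpw, fun he => hvp (mem_of_edgeOn he).2⟩⟩

lemma reach_of_not_dom (hbr : IsBridge G s u v) (h : ¬ Dom G s v w) :
    Reach (DelEdge G u v) s w :=
  by_contra fun h' => h ((dom_iff hbr w).2 h')

lemma reach_del_s_u (hG : StronglyConnected G) (hbr : IsBridge G s u v) :
    Reach (DelEdge G u v) s u := by
  have key : ∀ w, ReflTransGen G s w →
      Reach (DelEdge G u v) s w ∨ Reach (DelEdge G u v) s u := by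
    intro w h
    induction h with
    | refl => exact Or.inl ⟨[s], isWalk_single _ s⟩
    | @tail b c _ e ih =>
      rcases ih with h' | h'
      · by_cases hbc : b = u ∧ c = v
        · exact Or.inr (hbc.1 ▸ h')
        · refine Or.inl ?_
          rw [reach_iff] at h' ⊢
          exact h'.tail ⟨e, hbc⟩
      · exact Or.inr h'
  rcases key v (reach_iff.1 (hG s v)) with h | h
  · exact absurd h ((dom_iff hbr v).1 dom_v_v)
  · exact h

lemma reach_all_s (hG : StronglyConnected G) (hbr : IsBridge G s u v)
    (hnbr : ¬ IsBridge (Rev G) s v u) : ∀ x, Reach (DelEdge G u v) x s := by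
  have hu : Reach (DelEdge G u v) u s := by
    have hne : ¬ ∀ p, IsWalk (Rev G) s u p → EdgeOn v u p := fun h => hnbr ⟨hbr.1, h⟩
    push_neg at hne
    obtain ⟨p, hpw, hnedge⟩ := hne
    refine ⟨p.reverse, isWalk_delEdge_iff.2 ⟨isWalk_rev_iff.1 hpw, ?_⟩⟩
    rw [edgeOn_reverse]
    exact hnedge
  intro x
  have h := reach_iff.1 (hG x s)
  induction h using ReflTransGen.head_induction_on with
  | refl => exact ⟨[s], isWalk_single _ s⟩
  | @head a c e _ ih =>
    by_cases hac : a = u ∧ c = v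
    · exact hac.1 ▸ hu
    · rw [reach_iff] at ih ⊢
      exact .head ⟨e, hac⟩ ih

lemma dom_of_edge_into (hbr : IsBridge G s u v) (e : G a b) (hb : Dom G s v b)
    (hbv : b ≠ v) : Dom G s v a := by
  by_contra ha
  have h1 := reach_of_not_dom hbr ha
  have h2 : Reach (DelEdge G u v) s b := by
    rw [reach_iff] at h1 ⊢
    exact h1.tail ⟨e, fun hh => hbv hh.2⟩
  exact (dom_iff hbr b).1 hb h2

lemma eq_u_of_edge_v (hbr : IsBridge G s u v) (e : G a v) (ha : ¬ Dom G s v a) :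
    a = u := by
  by_contra hau
  have h1 := reach_of_not_dom hbr ha
  have h2 : Reach (DelEdge G u v) s v := by
    rw [reach_iff] at h1 ⊢
    exact h1.tail ⟨e, fun hh => hau hh.1⟩
  exact (dom_iff hbr v).1 dom_v_v h2

lemma anc_v_of_dom (hbr : IsBridge G s u v) (T : DFSTree G s) :
    ∀ w, Dom G s v w → T.Anc v w := by
  have H : ∀ n (w : V), T.pre w < n → Dom G s v w → T.Anc v w := by
    intro n
    induction n with
    | zero => intro w hw _; exact absurd hw (Nat.not_lt_zero _)
    | succ n ih =>
      intro w hw hd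
      by_cases hwv : w = v
      · subst hwv; exact anc_refl T w
      · have hws : w ≠ s := fun h => not_dom_s hbr (h ▸ hd)
        have hpd : Dom G s v (T.parent w) :=
          dom_of_edge_into hbr (T.parent_edge w hws) hd hwv
        have hlt : T.pre (T.parent w) < n :=
          lt_of_lt_of_le (T.pre_parent w hws) (Nat.lt_succ_iff.1 hw)
        exact anc_trans (ih (T.parent w) hlt hpd) ⟨1, by simp⟩
  exact fun w hd => H (T.pre w + 1) w (Nat.lt_succ_self _) hd

lemma parent_v_eq_u (hbr : IsBridge G s u v) (T : DFSTree G s) : T.parent v = u := by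
  have hvs := v_ne_s hbr
  have hnd : ¬ Dom G s v (T.parent v) := by
    intro h
    have h1 := pre_le_of_anc (anc_v_of_dom hbr T _ h)
    exact absurd (T.pre_parent v hvs) (not_lt.2 h1)
  exact eq_u_of_edge_v hbr (T.parent_edge v hvs) hnd

lemma u_ne_v (hbr : IsBridge G s u v) (T : DFSTree G s) : u ≠ v := by
  intro h
  have := T.pre_parent v (v_ne_s hbr)
  rw [parent_v_eq_u hbr T, h] at this
  exact lt_irrefl _ this

lemma not_anc_u_of_dom (hbr : IsBridge G s u v) (T : DFSTree G s)
    (hd : Dom G s v w) (h : T.Anc w u) : False := by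
  have h1 : T.Anc v u := anc_trans (anc_v_of_dom hbr T w hd) h
  have h2 : T.Anc u v := parent_v_eq_u hbr T ▸ (⟨1, by simp⟩ : T.Anc (T.parent v) v)
  have h3 := pre_lt_of_anc h2 (u_ne_v hbr T)
  have h4 := pre_le_of_anc h1
  omega

lemma ancRel_subset (hbr : IsBridge G s u v) (T : DFSTree G s) (hd : Dom G s v w) :
    ∀ a b, AncRel T w a b → DelEdge G u v a b := by
  rintro a b ⟨e, ha, _⟩
  refine ⟨e, ?_⟩
  rintro ⟨rfl, rfl⟩
  exact not_anc_u_of_dom hbr T hd ha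

lemma dom_between (hbr : IsBridge G s u v) (T : DFSTree G s) (hx : Dom G s v x)
    (hzx : T.Anc z x) (hvz : T.Anc v z) : Dom G s v z := by
  by_contra hz
  have hzv : z ≠ v := fun h => hz (h ▸ dom_v_v)
  have hpre : T.pre v < T.pre z := pre_lt_of_anc hvz (Ne.symm hzv)
  have hsub : ∀ a b, AncRel T z a b → DelEdge G u v a b := by
    rintro a b ⟨e, _, hb⟩
    refine ⟨e, ?_⟩
    rintro ⟨rfl, rfl⟩
    exact absurd (pre_le_of_anc hb) (not_le.2 hpre)
  have hre : Reach (DelEdge G u v) s x := by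
    rw [reach_iff]
    exact (reach_iff.1 (reach_of_not_dom hbr hz)).trans (ReflTransGen.mono hsub _ _ (rtg_tree_path T hzx))
  exact (dom_iff hbr x).1 hx hre

lemma delEdge_into_dom (hbr : IsBridge G s u v) (e : DelEdge G u v a b)
    (hb : Dom G s v b) : Dom G s v a := by
  by_cases hbv : b = v
  · subst hbv
    by_contra ha
    exact e.2 ⟨eq_u_of_edge_v hbr e.1 ha, rfl⟩
  · exact dom_of_edge_into hbr e.1 hb hbv

/-- `G` restricted to vertices dominated by `v`. -/
def DomRel (G : V → V → Prop) (s v : V) : V → V → Prop :=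
  fun a b => G a b ∧ Dom G s v a ∧ Dom G s v b

lemma rtg_domRel (hbr : IsBridge G s u v) :
    ReflTransGen (DelEdge G u v) x y → Dom G s v y → ReflTransGen (DomRel G s v) x y := by
  intro h
  induction h with
  | refl => intro _; exact .refl
  | @tail b c _ e ih =>
    intro hc
    have hb := delEdge_into_dom hbr e hc
    exact (ih hb).tail ⟨e.1, hb, hc⟩

lemma dom_of_rtg_domRel (h : ReflTransGen (DomRel G s v) x y) (hx : Dom G s v x) :
    Dom G s v y := by
  induction h with
  | refl => exact hx
  | tail _ e _ => exact e.2.2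

end BridgeLemmas

section LoopLemmas

variable {G : V → V → Prop} {s u v x y z a b w m : V} {T : DFSTree G s} {hp : V → V}

lemma hanc_refl : HAnc hp x x := ⟨0, rfl⟩

lemma hanc_trans (h1 : HAnc hp a b) (h2 : HAnc hp b c) : HAnc hp a c := by
  obtain ⟨m, hm⟩ := h1; obtain ⟨n, hn⟩ := h2
  exact ⟨m + n, by rw [Function.iterate_add_apply, hn, hm]⟩

lemma anc_of_hp_iterate (hlp : IsLoopParent G s T.Anc hp) :
    ∀ n (x : V), T.Anc (hp^[n] x) x := by
  intro n
  induction n with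
  | zero => intro x; rw [Function.iterate_zero_apply]; exact anc_refl T x
  | succ n ih =>
    intro x
    rw [Function.iterate_succ_apply']
    by_cases hcs : hp^[n] x = s
    · rw [hcs, hlp.1]; exact anc_root' T x
    · exact anc_trans (hlp.2 _ hcs).1 (ih x)

lemma anc_of_hanc (hlp : IsLoopParent G s T.Anc hp) (h : HAnc hp w x) : T.Anc w x := by
  obtain ⟨n, hn⟩ := h
  have := anc_of_hp_iterate hlp n x
  rwa [hn] at this

lemma pre_hp_lt (hlp : IsLoopParent G s T.Anc hp) (hx : x ≠ s) :
    T.pre (hp x) < T.pre x :=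
  pre_lt_of_anc (hlp.2 x hx).1 (hlp.2 x hx).2.1

lemma hp_reach_root (hlp : IsLoopParent G s T.Anc hp) : ∀ x, ∃ n, hp^[n] x = s := by
  have H : ∀ n (x : V), T.pre x < n → ∃ k, hp^[k] x = s := by
    intro n
    induction n with
    | zero => intro x h; exact absurd h (Nat.not_lt_zero _)
    | succ n ih =>
      intro x h
      by_cases hxs : x = s
      · exact ⟨0, by rw [Function.iterate_zero_apply, hxs]⟩
      · obtain ⟨k, hk⟩ := ih (hp x) (lt_of_lt_of_le (pre_hp_lt hlp hxs) (Nat.lt_succ_iff.1 h))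
        exact ⟨k + 1, by rw [Function.iterate_succ_apply, hk]⟩
  exact fun x => H (T.pre x + 1) x (Nat.lt_succ_self _)

lemma hanc_of_inLoop (hlp : IsLoopParent G s T.Anc hp) :
    ∀ (c : V), T.Anc m c → ReflTransGen (AncRel T m) c m → HAnc hp m c := by
  have H : ∀ n (c : V), T.pre c < n → T.Anc m c → ReflTransGen (AncRel T m) c m →
      HAnc hp m c := by
    intro n
    induction n with
    | zero => intro c h _ _; exact absurd h (Nat.not_lt_zero _)
    | succ n ih =>
      intro c hpre hanc hrtg
      by_cases hcm : c = m
      · subst hcm; exact hanc_refl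
      · have hcs : c ≠ s := by
          rintro rfl
          exact hcm (anc_antisymm hanc (anc_root' T m)).symm
        obtain ⟨h1, h2, _, h4⟩ := hlp.2 c hcs
        have hil : InLoop G T.Anc m c := by
          refine ⟨hanc, ?_⟩
          exact rtg_walkP (P := fun z => T.Anc m z) hanc
            (ReflTransGen.mono (fun a b hh => ⟨hh.1, hh.2.2⟩) _ _ hrtg)
        have hm_hpc : T.Anc m (hp c) := h4 m hanc (Ne.symm hcm) hil
        have hrtg' : ReflTransGen (AncRel T m) (hp c) m := by
          have t1 : ReflTransGen (AncRel T (hp c)) (hp c) c := rtg_tree_path T h1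
          exact (ReflTransGen.mono (fun a b hh =>
            ⟨hh.1, anc_trans hm_hpc hh.2.1, anc_trans hm_hpc hh.2.2⟩) _ _ t1).trans hrtg
        have hpre' : T.pre (hp c) < n :=
          lt_of_lt_of_le (pre_hp_lt hlp hcs) (Nat.lt_succ_iff.1 hpre)
        obtain ⟨k, hk⟩ := ih (hp c) hpre' hm_hpc hrtg'
        exact ⟨k + 1, by rw [Function.iterate_succ_apply, hk]⟩
  exact fun c h1 h2 => H (T.pre c + 1) c (Nat.lt_succ_self _) h1 h2

/-- `w` is the nearest ancestor of `x` in the loop nesting tree whose own parent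
leaves `D(v)`. -/
def NBP (G : V → V → Prop) (s v : V) (hp : V → V) (x w : V) : Prop :=
  ∃ k, hp^[k] x = w ∧ (∀ j ≤ k, Dom G s v (hp^[j] x)) ∧ ¬ Dom G s v (hp^[k+1] x)

lemma nbp_exists (hbr : IsBridge G s u v) (hlp : IsLoopParent G s T.Anc hp)
    (hx : Dom G s v x) : ∃ w, NBP G s v hp x w := by
  classical
  have hex : ∃ n, ¬ Dom G s v (hp^[n+1] x) := by
    obtain ⟨N, hN⟩ := hp_reach_root hlp x
    cases N with
    | zero =>
      rw [Function.iterate_zero_apply] at hN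
      exact absurd (hN ▸ hx) (not_dom_s hbr)
    | succ n => exact ⟨n, by rw [hN]; exact not_dom_s hbr⟩
  refine ⟨hp^[Nat.find hex] x, Nat.find hex, rfl, ?_, Nat.find_spec hex⟩
  intro j hj
  cases j with
  | zero => rw [Function.iterate_zero_apply]; exact hx
  | succ i => exact not_not.1 (Nat.find_min hex (Nat.lt_of_succ_le hj))

lemma nbp_props (h : NBP G s v hp x w) : Dom G s v w ∧ ¬ Dom G s v (hp w) := by
  obtain ⟨k, rfl, hall, hout⟩ := h
  refine ⟨hall k le_rfl, ?_⟩
  rw [Function.iterate_succ_apply'] at hout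
  exact hout

lemma nbp_unique {w' : V} (h1 : NBP G s v hp x w) (h2 : NBP G s v hp x w') : w = w' := by
  obtain ⟨k1, hk1, hall1, hout1⟩ := h1
  obtain ⟨k2, hk2, hall2, hout2⟩ := h2
  have hkk : k1 = k2 := by
    by_contra hne
    rcases Nat.lt_or_ge k1 k2 with h | h
    · exact hout1 (hall2 (k1 + 1) h)
    · exact hout2 (hall1 (k2 + 1) (lt_of_le_of_ne h (Ne.symm hne)))
  rw [← hk1, ← hk2, hkk]

lemma nbp_self (h1 : Dom G s v w) (h2 : ¬ Dom G s v (hp w)) : NBP G s v hp w w :=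
  ⟨0, rfl, fun j hj => by rw [Nat.le_zero.1 hj]; simpa using h1, by simpa using h2⟩

lemma nbp_shift (hbr : IsBridge G s u v) (hlp : IsLoopParent G s T.Anc hp)
    (hx : Dom G s v x) (hm : Dom G s v m) (hanc : HAnc hp m x)
    (hw : NBP G s v hp x w) : NBP G s v hp m w := by
  obtain ⟨j, hj⟩ := hanc
  obtain ⟨k, hk, hall, hout⟩ := hw
  have hjk : j ≤ k := by
    by_contra hgt
    push_neg at hgt
    have hzx : T.Anc (hp^[k+1] x) x := anc_of_hp_iterate hlp (k+1) x
    have hmz : HAnc hp m (hp^[k+1] x) :=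
      ⟨j - (k+1), by rw [← Function.iterate_add_apply, Nat.sub_add_cancel hgt]; exact hj⟩
    have hvz : T.Anc v (hp^[k+1] x) :=
      anc_trans (anc_v_of_dom hbr T m hm) (anc_of_hanc hlp hmz)
    exact hout (dom_between hbr T hx hzx hvz)
  refine ⟨k - j, ?_, ?_, ?_⟩
  · rw [← hj, ← Function.iterate_add_apply, Nat.sub_add_cancel hjk]
    exact hk
  · intro i hi
    rw [← hj, ← Function.iterate_add_apply]
    exact hall (i + j) (by omega)
  · rw [← hj, ← Function.iterate_add_apply]
    have harith : k - j + 1 + j = k + 1 := by omega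
    rw [harith]
    exact hout

lemma sconn_step (hbr : IsBridge G s u v) (hlp : IsLoopParent G s T.Anc hp)
    (hz : Dom G s v z) (hw : Dom G s v (hp z)) :
    SConn (DelEdge G u v) z (hp z) := by
  have hzs : z ≠ s := fun h => not_dom_s hbr (h ▸ hz)
  obtain ⟨h1, _, h3, _⟩ := hlp.2 z hzs
  obtain ⟨_, p, hpw, hpP⟩ := h3
  constructor
  · rw [reach_iff]
    exact ReflTransGen.mono
      (ancRel_subset hbr T hw) _ _ (isWalk_rtg (P := fun y => T.Anc (hp z) y) p z hpw hpP)
  · rw [reach_iff]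
    exact ReflTransGen.mono (ancRel_subset hbr T hw) _ _ (rtg_tree_path T h1)

lemma sconn_nbp (hbr : IsBridge G s u v) (hlp : IsLoopParent G s T.Anc hp)
    (hx : Dom G s v x) (hw : NBP G s v hp x w) : SConn (DelEdge G u v) x w := by
  obtain ⟨k, hk, hall, _⟩ := hw
  subst hk
  have H : ∀ j, j ≤ k → SConn (DelEdge G u v) x (hp^[j] x) := by
    intro j
    induction j with
    | zero =>
      intro _
      rw [Function.iterate_zero_apply]
      exact sconn_refl' _ x
    | succ i ih =>
      intro hik
      have h1 := ih (Nat.le_of_succ_le hik)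
      have h2 : SConn (DelEdge G u v) (hp^[i] x) (hp (hp^[i] x)) :=
        sconn_step hbr hlp (hall i (Nat.le_of_succ_le hik))
          (by have := hall (i + 1) hik; rwa [Function.iterate_succ_apply'] at this)
      rw [Function.iterate_succ_apply']
      exact sconn_trans' h1 h2
  exact H k le_rfl

lemma sconn_nbp_eq [Fintype V] {w' : V} (hbr : IsBridge G s u v)
    (hlp : IsLoopParent G s T.Anc hp)
    (hx : Dom G s v x) (hy : Dom G s v y) (hxy : SConn (DelEdge G u v) x y)
    (hw1 : NBP G s v hp x w) (hw2 : NBP G s v hp y w') : w = w' := by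
  classical
  have hxy1 : ReflTransGen (DomRel G s v) x y := rtg_domRel hbr (reach_iff.1 hxy.1) hy
  have hyx : ReflTransGen (DomRel G s v) y x := rtg_domRel hbr (reach_iff.1 hxy.2) hx
  set C : Set V := {c | ReflTransGen (DomRel G s v) x c ∧ ReflTransGen (DomRel G s v) c x}
    with hC
  have hxC : x ∈ C := ⟨.refl, .refl⟩
  have hyC : y ∈ C := ⟨hxy1, hyx⟩
  obtain ⟨m, hmC, hmin⟩ := Set.exists_min_image C T.pre (Set.toFinite C) ⟨x, hxC⟩
  have key : ∀ a b, ReflTransGen (DomRel G s v) a b → ReflTransGen (DomRel G s v) b x →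
      ReflTransGen (DomRel G s v) x a →
      ReflTransGen (fun p q => DomRel G s v p q ∧ p ∈ C ∧ q ∈ C) a b := by
    intro a b hab hbx
    induction hab using ReflTransGen.head_induction_on with
    | refl => intro _; exact .refl
    | @head a' c e hcb ih =>
      intro hxa
      have ha'C : a' ∈ C := ⟨hxa, (ReflTransGen.head e hcb).trans hbx⟩
      have hcC : c ∈ C := ⟨hxa.tail e, hcb.trans hbx⟩
      exact .head ⟨e, ha'C, hcC⟩ (ih (hxa.tail e))
  have hdomC : ∀ c ∈ C, Dom G s v c := by
    rintro c ⟨h1, _⟩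
    exact dom_of_rtg_domRel h1 hx
  have hancC : ∀ c ∈ C, T.Anc m c := by
    rintro c ⟨hxc, hcx⟩
    have hmc : ReflTransGen (DomRel G s v) m c := hmC.2.trans hxc
    have h := key m c hmc hcx hmC.1
    refine anc_of_rtg T m (anc_refl T m) (ReflTransGen.mono ?_ _ _ h)
    rintro p q ⟨e, hpC, hqC⟩
    exact ⟨e.1, hmin p hpC, hmin q hqC⟩
  have hhanc : ∀ c ∈ C, HAnc hp m c := by
    intro c hc
    have h1 : T.Anc m c := hancC c hc
    have hcm : ReflTransGen (DomRel G s v) c m := hc.2.trans hmC.1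
    have h2 := key c m hcm hmC.2 hc.1
    refine hanc_of_inLoop hlp c h1 (ReflTransGen.mono ?_ _ _ h2)
    rintro p q ⟨e, hpC, hqC⟩
    exact ⟨e.1, hancC p hpC, hancC q hqC⟩
  have hmdom : Dom G s v m := hdomC m hmC
  exact nbp_unique (nbp_shift hbr hlp hx hmdom (hhanc x hxC) hw1)
    (nbp_shift hbr hlp hy hmdom (hhanc y hyC) hw2)

end LoopLemmas

lemma isSCC_iff {H : V → V → Prop} {C : Set V} :
    IsSCC H C ↔ ∃ x, C = {y | SConn H x y} := by
  constructor
  · rintro ⟨⟨x, hx⟩, hpair, hcl⟩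
    exact ⟨x, Set.ext fun y => ⟨fun hy => hpair x hx y hy, fun hy => hcl x hx y hy⟩⟩
  · rintro ⟨x, rfl⟩
    refine ⟨⟨x, sconn_refl' H x⟩, ?_, ?_⟩
    · intro a ha b hb
      exact sconn_trans' (sconn_symm' ha) hb
    · intro a ha b hb
      exact sconn_trans' ha hb


/-- If `(u,v)` is a strong bridge that is a bridge of `G_s` but not of `G_s^R`, the
number of strongly connected components of `G \ (u,v)` equals the number of vertices
`w ∈ D(v)` with `h(w) ∉ D(v)`, plus one. -/
theorem stmt9 [Fintype V] (G : V → V → Prop) (hG : StronglyConnected G) (s u v : V)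
    (hsb : IsStrongBridge G u v)
    (hbr : IsBridge G s u v) (hnbr : ¬ IsBridge (Rev G) s v u)
    (T : DFSTree G s) (hp : V → V) (hlp : IsLoopParent G s T.Anc hp) :
    {C : Set V | IsSCC (DelEdge G u v) C}.ncard
      = {w | Dom G s v w ∧ ¬ Dom G s v (hp w)}.ncard + 1 := by
  classical
  have hreach_s : ∀ x, ¬ Dom G s v x → Reach (DelEdge G u v) s x :=
    fun x h => reach_of_not_dom hbr h
  have hall_s : ∀ x, Reach (DelEdge G u v) x s := reach_all_s hG hbr hnbr
  have hclass_out : ∀ x, ¬ Dom G s v x →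
      {y | SConn (DelEdge G u v) x y} = {y | ¬ Dom G s v y} := by
    intro x hx
    ext y
    simp only [Set.mem_setOf_eq]
    constructor
    · intro hxy hy
      exact (dom_iff hbr y).1 hy (reach_trans' (hreach_s x hx) hxy.1)
    · intro hy
      exact sconn_trans' ⟨hall_s x, hreach_s x hx⟩ ⟨hreach_s y hy, hall_s y⟩
  have hclass_in : ∀ x w, Dom G s v x → NBP G s v hp x w →
      {y | SConn (DelEdge G u v) x y} = {y | Dom G s v y ∧ NBP G s v hp y w} := by
    intro x w hx hw
    ext y
    simp only [Set.mem_setOf_eq]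
    constructor
    · intro hxy
      have hy : Dom G s v y := by
        by_contra hy
        exact (dom_iff hbr x).1 hx (reach_trans' (hreach_s y hy) hxy.2)
      obtain ⟨w2, hw2⟩ := nbp_exists hbr hlp hy
      have heq : w = w2 := sconn_nbp_eq hbr hlp hx hy hxy hw hw2
      exact ⟨hy, heq ▸ hw2⟩
    · rintro ⟨hy, hyw⟩
      exact sconn_trans' (sconn_nbp hbr hlp hx hw) (sconn_symm' (sconn_nbp hbr hlp hy hyw))
  have hSet : {C : Set V | IsSCC (DelEdge G u v) C}
      = insert {y | ¬ Dom G s v y}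
          ((fun w => {y | Dom G s v y ∧ NBP G s v hp y w}) ''
            {w | Dom G s v w ∧ ¬ Dom G s v (hp w)}) := by
    ext C
    simp only [Set.mem_setOf_eq, Set.mem_insert_iff, Set.mem_image]
    constructor
    · intro hC
      obtain ⟨x, rfl⟩ := isSCC_iff.1 hC
      by_cases hx : Dom G s v x
      · obtain ⟨w, hw⟩ := nbp_exists hbr hlp hx
        exact Or.inr ⟨w, nbp_props hw, (hclass_in x w hx hw).symm⟩
      · exact Or.inl (hclass_out x hx)
    · intro hC
      rcases hC with rfl | ⟨w, hwB, rfl⟩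
      · exact isSCC_iff.2 ⟨s, (hclass_out s (not_dom_s hbr)).symm⟩
      · exact isSCC_iff.2 ⟨w, (hclass_in w w hwB.1 (nbp_self hwB.1 hwB.2)).symm⟩
  have hnotmem : {y | ¬ Dom G s v y} ∉
      ((fun w => {y | Dom G s v y ∧ NBP G s v hp y w}) ''
        {w | Dom G s v w ∧ ¬ Dom G s v (hp w)}) := by
    rintro ⟨w, hwB, heq⟩
    have hs : s ∈ {y | ¬ Dom G s v y} := not_dom_s hbr
    rw [← heq] at hs
    exact (not_dom_s hbr) hs.1
  have hinj : Set.InjOn (fun w => {y | Dom G s v y ∧ NBP G s v hp y w})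
      {w | Dom G s v w ∧ ¬ Dom G s v (hp w)} := by
    intro w1 h1 w2 h2 heq
    have hw1 : w1 ∈ {y | Dom G s v y ∧ NBP G s v hp y w1} :=
      ⟨h1.1, nbp_self h1.1 h1.2⟩
    have hw2 := (Set.ext_iff.1 heq w1).1 hw1
    exact nbp_unique (nbp_self h1.1 h1.2) hw2.2
  rw [hSet, Set.ncard_insert_of_notMem hnotmem (Set.toFinite _),
    Set.ncard_image_of_injOn hinj]

end StrongConn
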